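/- arXiv:1501.04721 — 3 statements merged into one kernel-verified Lean document; each statement's English description precedes it below -/
import Mathlib

section
/- Let M ≥ 1 and let A be an M×M complex Hermitian matrix with eigenvalues λ_1, …, λ_M (counted with multiplicity). Then there exists an M×M complex Hermitian matrix W* with W*² = W* (an orthogonal-projection matrix) such that: (a) W* ⪰ 0 and W* − W*² ⪰ 0; (b) for every M×M complex Hermitian matrix W satisfying W ⪰ 0 and W − W² ⪰ 0, one has Re Tr(A·W) ≤ Re Tr(A·W*); and (c) Re Tr(A·W*) = Σ_{i=1}^{M} max(λ_i, 0). (In the paper, W* = U*U*† where the columns of U* are orthonormal eigenvectors of A corresponding to its positive eigenvalues; this is the closed-form solution of the decomposed dual subproblem and is the key step proving tightness of the semidefinite relaxation in Theorem 3.) -/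
open Matrix ComplexOrder

/-- Diagonal entry bound for a Hermitian matrix `B` with `B ⪰ 0` and `B - B² ⪰ 0`:
each diagonal entry has real part in `[0,1]`. -/
lemma aux_diag_bounds {M : ℕ} (B : Matrix (Fin M) (Fin M) ℂ)
    (hB : B.IsHermitian) (hBpsd : B.PosSemidef) (hBsub : (B - B * B).PosSemidef)
    (i : Fin M) : 0 ≤ (B i i).re ∧ (B i i).re ≤ 1 := by
  have hdiag : ∀ (C : Matrix (Fin M) (Fin M) ℂ), C.PosSemidef → 0 ≤ (C i i).re := by
    intro C hC
    have key : star (Pi.single i (1:ℂ)) ⬝ᵥ C *ᵥ Pi.single i 1 = C i i := by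
      simp [dotProduct, mulVec, Pi.single_apply]
    have h2 := hC.dotProduct_mulVec_nonneg (Pi.single i 1)
    rw [key] at h2
    exact (Complex.le_def.mp h2).1
  have h0 : 0 ≤ (B i i).re := hdiag B hBpsd
  have h1 : 0 ≤ ((B - B * B) i i).re := hdiag _ hBsub
  have hsq : ((B * B) i i).re = ∑ j, Complex.normSq (B i j) := by
    have hsy : ∀ j, B j i = star (B i j) := by
      intro j
      have := congrFun (congrFun hB j) i
      simpa [conjTranspose_apply] using this.symm
    simp only [Matrix.mul_apply, Complex.re_sum]
    refine Finset.sum_congr rfl fun j _ => ?_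
    rw [hsy j]
    simp only [Complex.normSq_apply, Complex.mul_re, RCLike.star_def, Complex.conj_re,
      Complex.conj_im]
    ring
  have hge : ((B * B) i i).re ≥ (B i i).re ^ 2 := by
    rw [hsq]
    calc (B i i).re ^ 2 ≤ Complex.normSq (B i i) := by
          simp [Complex.normSq_apply, sq]; nlinarith [sq_nonneg (B i i).im]
      _ ≤ ∑ j, Complex.normSq (B i j) :=
          Finset.single_le_sum (fun j _ => Complex.normSq_nonneg _) (Finset.mem_univ i)
  have hsub : ((B - B * B) i i).re = (B i i).re - ((B * B) i i).re := by
    simp [Matrix.sub_apply]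
  refine ⟨h0, ?_⟩
  rw [hsub] at h1
  nlinarith

/-- existence of the optimal projection matrix `W*` maximizing
`Re Tr(A·W)` over Hermitian `W` with `W ⪰ 0` and `W − W² ⪰ 0`, with optimal value
the sum of the positive parts of the eigenvalues of `A`. -/
theorem stmt0 (M : ℕ) (hM : 1 ≤ M) (A : Matrix (Fin M) (Fin M) ℂ)
    (hA : A.IsHermitian) :
    ∃ Wstar : Matrix (Fin M) (Fin M) ℂ,
      Wstar.IsHermitian ∧ Wstar * Wstar = Wstar ∧
      Wstar.PosSemidef ∧ (Wstar - Wstar * Wstar).PosSemidef ∧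
      (∀ W : Matrix (Fin M) (Fin M) ℂ, W.IsHermitian → W.PosSemidef →
        (W - W * W).PosSemidef → ((A * W).trace).re ≤ ((A * Wstar).trace).re) ∧
      ((A * Wstar).trace).re = ∑ i, max (hA.eigenvalues i) 0 := by
  classical
  set U : Matrix (Fin M) (Fin M) ℂ := (hA.eigenvectorUnitary : Matrix (Fin M) (Fin M) ℂ) with hUdef
  have hUmem := hA.eigenvectorUnitary.2
  have hU1 : Uᴴ * U = 1 := by
    have := hUmem.1
    simpa [Matrix.star_eq_conjTranspose] using this
  have hU2 : U * Uᴴ = 1 := by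
    have := hUmem.2
    simpa [Matrix.star_eq_conjTranspose] using this
  set p : Fin M → ℂ := fun i => if 0 < hA.eigenvalues i then 1 else 0 with hpdef
  set P : Matrix (Fin M) (Fin M) ℂ := Matrix.diagonal p with hPdef
  have hPP : P * P = P := by
    rw [hPdef, diagonal_mul_diagonal]
    refine congrArg Matrix.diagonal (funext fun i => ?_)
    by_cases h : 0 < hA.eigenvalues i <;> simp [hpdef, h]
  have hPH : Pᴴ = P := by
    rw [hPdef, diagonal_conjTranspose]
    refine congrArg Matrix.diagonal (funext fun i => ?_)
    by_cases h : 0 < hA.eigenvalues i <;> simp [hPdef, hpdef, Pi.star_apply, apply_ite, h]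
  have hPpsd : P.PosSemidef := by
    refine Matrix.PosSemidef.diagonal fun i => ?_
    by_cases h : 0 < hA.eigenvalues i <;> simp [hpdef, h]
  set Wstar : Matrix (Fin M) (Fin M) ℂ := U * P * Uᴴ with hWdef
  have hWH : Wstar.IsHermitian := by
    unfold Matrix.IsHermitian
    rw [hWdef]
    simp [Matrix.conjTranspose_mul, hPH, Matrix.mul_assoc]
  have hWW : Wstar * Wstar = Wstar := by
    rw [hWdef]
    calc U * P * Uᴴ * (U * P * Uᴴ) = U * P * (Uᴴ * U) * P * Uᴴ := by
          simp only [Matrix.mul_assoc]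
      _ = U * P * Uᴴ := by rw [hU1]; simp only [Matrix.mul_one, Matrix.mul_assoc, hPP]
  have hWpsd : Wstar.PosSemidef := hPpsd.mul_mul_conjTranspose_same U
  have hWsub : (Wstar - Wstar * Wstar).PosSemidef := by
    rw [hWW, sub_self]
    exact Matrix.PosSemidef.zero
  set D : Matrix (Fin M) (Fin M) ℂ :=
    Matrix.diagonal (RCLike.ofReal ∘ hA.eigenvalues) with hDdef
  have hspec : A = U * D * Uᴴ := by
    have := hA.spectral_theorem
    rw [hUdef, hDdef]
    simpa [Matrix.star_eq_conjTranspose] using this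
  -- trace value
  have htrW : (A * Wstar).trace = ∑ i, ((hA.eigenvalues i : ℂ) * p i) := by
    have : A * Wstar = U * (D * P) * Uᴴ := by
      rw [hspec, hWdef]
      calc U * D * Uᴴ * (U * P * Uᴴ) = U * D * (Uᴴ * U) * P * Uᴴ := by
            simp only [Matrix.mul_assoc]
        _ = U * (D * P) * Uᴴ := by rw [hU1]; simp only [Matrix.mul_one, Matrix.mul_assoc]
    rw [this, Matrix.trace_mul_cycle, ← Matrix.mul_assoc, hU1, Matrix.one_mul,
      hDdef, hPdef, Matrix.diagonal_mul_diagonal, Matrix.trace_diagonal]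
    simp [Function.comp]
  have hval : ((A * Wstar).trace).re = ∑ i, max (hA.eigenvalues i) 0 := by
    rw [htrW, Complex.re_sum]
    refine Finset.sum_congr rfl fun i _ => ?_
    by_cases h : 0 < hA.eigenvalues i
    · simp [hpdef, h, max_eq_left h.le]
    · simp [hpdef, h, max_eq_right (not_lt.mp h)]
  refine ⟨Wstar, hWH, hWW, hWpsd, hWsub, ?_, hval⟩
  intro W hW hWp hWs
  set B : Matrix (Fin M) (Fin M) ℂ := Uᴴ * W * U with hBdef
  have hBH : B.IsHermitian := by
    unfold Matrix.IsHermitian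
    rw [hBdef]
    simp [Matrix.conjTranspose_mul, hW.eq, Matrix.mul_assoc]
  have hBpsd : B.PosSemidef := hWp.conjTranspose_mul_mul_same U
  have hBB : B * B = Uᴴ * (W * W) * U := by
    rw [hBdef]
    calc Uᴴ * W * U * (Uᴴ * W * U) = Uᴴ * W * (U * Uᴴ) * W * U := by
          simp only [Matrix.mul_assoc]
      _ = Uᴴ * (W * W) * U := by rw [hU2]; simp only [Matrix.mul_one, Matrix.mul_assoc]
  have hBsub : (B - B * B).PosSemidef := by
    have : B - B * B = Uᴴ * (W - W * W) * U := by
      rw [hBB, hBdef, Matrix.mul_sub, Matrix.sub_mul]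
    rw [this]
    exact hWs.conjTranspose_mul_mul_same U
  have htr : (A * W).trace = ∑ i, ((hA.eigenvalues i : ℂ) * B i i) := by
    have h1 : (A * W).trace = (D * B).trace := by
      rw [hspec, hBdef]
      calc (U * D * Uᴴ * W).trace = (U * (D * (Uᴴ * W))).trace := by
            simp only [Matrix.mul_assoc]
        _ = (D * (Uᴴ * W) * U).trace := by rw [Matrix.trace_mul_comm]
        _ = (D * B).trace := by rw [hBdef, Matrix.mul_assoc]
    rw [h1, hDdef]
    rw [Matrix.trace]
    refine Finset.sum_congr rfl fun i _ => ?_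
    simp [Matrix.diag, Matrix.diagonal_mul]
  rw [htr, hval, Complex.re_sum]
  refine Finset.sum_le_sum fun i _ => ?_
  obtain ⟨hb0, hb1⟩ := aux_diag_bounds B hBH hBpsd hBsub i
  have hre : ((hA.eigenvalues i : ℂ) * B i i).re = hA.eigenvalues i * (B i i).re := by
    simp [Complex.mul_re]
  rw [hre]
  by_cases h : 0 ≤ hA.eigenvalues i
  · calc hA.eigenvalues i * (B i i).re ≤ hA.eigenvalues i * 1 :=
        mul_le_mul_of_nonneg_left hb1 h
      _ = hA.eigenvalues i := mul_one _
      _ ≤ max (hA.eigenvalues i) 0 := le_max_left _ _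
  · have : hA.eigenvalues i * (B i i).re ≤ 0 :=
      mul_nonpos_of_nonpos_of_nonneg (le_of_not_ge h) hb0
    exact this.trans (le_max_right _ _)
end

section
/- Let δ > 0, σ := (√(2δ) + √(2δ + 4))/2, and let t, c be real numbers with t ≥ σ² and (1 − √(2δ)/σ)·t ≥ c. Let Q be an n×n complex Hermitian matrix with 0 ⪯ Q ⪯ I_n and Tr(Q) ≥ t. Then Tr(Q) − √(2δ)·‖Q‖_F ≥ c. (This composite inequality is the deterministic core of Theorem 2: it shows that the quadratic restriction (CC12) forces the Bernstein-type sufficient condition (BC1) to hold.) -/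
open Matrix ComplexOrder

lemma trace_re_nonneg {n : ℕ} {M : Matrix (Fin n) (Fin n) ℂ} (hM : M.PosSemidef) :
    0 ≤ (M.trace).re := by
  rw [Matrix.trace, Complex.re_sum]
  apply Finset.sum_nonneg
  intro i _
  have := hM.re_dotProduct_nonneg (Pi.single i 1)
  simpa [dotProduct, mulVec, Pi.single_apply, Finset.sum_ite_eq, Finset.sum_ite_eq'] using this

/-- deterministic core of Theorem 2: if `t ≥ σ²`,
`(1 − √(2δ)/σ)·t ≥ c`, and `Q` is Hermitian with `0 ⪯ Q ⪯ I` and `Tr(Q) ≥ t`,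
then `Tr(Q) − √(2δ)·‖Q‖_F ≥ c`, where `‖Q‖_F = √(Tr(Q†Q))`. -/
theorem stmt9 (n : ℕ) (δ σ t c : ℝ) (hδ : 0 < δ)
    (hσ : σ = (Real.sqrt (2 * δ) + Real.sqrt (2 * δ + 4)) / 2)
    (ht : σ ^ 2 ≤ t) (htc : c ≤ (1 - Real.sqrt (2 * δ) / σ) * t)
    (Q : Matrix (Fin n) (Fin n) ℂ) (hQ : Q.IsHermitian)
    (hQ0 : Q.PosSemidef) (hQ1 : ((1 : Matrix (Fin n) (Fin n) ℂ) - Q).PosSemidef)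
    (hTr : t ≤ (Q.trace).re) :
    c ≤ (Q.trace).re - Real.sqrt (2 * δ) * Real.sqrt (((Qᴴ * Q).trace).re) := by
  -- Matrix part: Tr(QᴴQ) ≤ Tr(Q) (real parts)
  obtain ⟨B, hB⟩ : ∃ B : Matrix (Fin n) (Fin n) ℂ, Q = Bᴴ * B := by
    open scoped MatrixOrder in exact CStarAlgebra.nonneg_iff_eq_star_mul_self.mp hQ0.nonneg
  have hdiff : (Q.trace - (Qᴴ * Q).trace).re = ((B * (1 - Q) * Bᴴ).trace).re := by
    have : Q.trace - (Qᴴ * Q).trace = (Q * (1 - Q)).trace := by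
      rw [Matrix.mul_sub, Matrix.mul_one, Matrix.trace_sub, hQ.eq]
    rw [this]
    have : Q * (1 - Q) = Bᴴ * (B * (1 - Q)) := by rw [hB, Matrix.mul_assoc]
    rw [this, Matrix.trace_mul_comm, Matrix.mul_assoc]
  have hkey : ((Qᴴ * Q).trace).re ≤ (Q.trace).re := by
    have h1 := trace_re_nonneg (hQ1.mul_mul_conjTranspose_same B)
    rw [← hdiff] at h1
    simp only [Complex.sub_re] at h1
    linarith
  have hQQ0 : 0 ≤ ((Qᴴ * Q).trace).re :=
    trace_re_nonneg (Matrix.posSemidef_conjTranspose_mul_self Q)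
  -- Real analysis part
  set a := Real.sqrt (2 * δ) with ha
  set T := (Q.trace).re
  have ha0 : 0 ≤ a := Real.sqrt_nonneg _
  have hσpos : 0 < σ := by
    rw [hσ]
    have : (0:ℝ) < Real.sqrt (2 * δ + 4) := Real.sqrt_pos.mpr (by linarith)
    linarith
  have haσ : a ≤ σ := by
    rw [hσ, ha]
    have : Real.sqrt (2 * δ) ≤ Real.sqrt (2 * δ + 4) := Real.sqrt_le_sqrt (by linarith)
    linarith
  have hst : σ ≤ Real.sqrt t := by
    have := Real.sqrt_le_sqrt ht
    rwa [Real.sqrt_sq hσpos.le] at this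
  have hstsq : Real.sqrt t ^ 2 = t := Real.sq_sqrt (by nlinarith)
  have hsT : Real.sqrt t ≤ Real.sqrt T := Real.sqrt_le_sqrt (by linarith)
  have hsTsq : Real.sqrt T ^ 2 = T := Real.sq_sqrt (by nlinarith)
  have hF : Real.sqrt (((Qᴴ * Q).trace).re) ≤ Real.sqrt T := Real.sqrt_le_sqrt hkey
  have step1 : a * Real.sqrt (((Qᴴ * Q).trace).re) ≤ a * Real.sqrt T :=
    mul_le_mul_of_nonneg_left hF ha0
  have hu : a / σ * σ = a := div_mul_cancel₀ a hσpos.ne'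
  have step2 : c ≤ T - a * Real.sqrt T := by
    have h1 : c ≤ t - a / σ * t := by linarith [htc]
    have h2 : a / σ * t = a / σ * σ * (t / σ) := by field_simp
    have hu0 : 0 ≤ a / σ := div_nonneg ha0 hσpos.le
    -- a * √t ≤ (a/σ) * t
    have h3 : a * Real.sqrt t ≤ a / σ * t := by
      rw [h2, hu]
      have : Real.sqrt t ≤ t / σ := by
        rw [le_div_iff₀ hσpos]
        nlinarith [hst, hσpos]
      nlinarith [this, ha0]
    have h4 : t - a * Real.sqrt t ≤ T - a * Real.sqrt T := by
      nlinarith [hsT, hst, haσ, Real.sqrt_nonneg t]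
    linarith
  linarith [step1, step2]
end

section
/- Zero-forcing projection identity: let h_1, …, h_K ∈ ℂ^S, let H be the K×S complex matrix whose k-th row is h_k† (the conjugate transpose of h_k), and suppose HH† is invertible. For each k, let c_k ∈ ℂ^S be the k-th column of H†(HH†)⁻¹ and let d_k := ((HH†)⁻¹)_{kk}. Then d_k is a positive real number, d_k = ‖c_k‖², and the orthogonal projection of h_k onto the orthogonal complement of span{h_j : j ≠ k} in ℂ^S equals d_k⁻¹ · c_k. (This identifies the unnormalized ZF inner precoding vector of user k with the corresponding column of the channel pseudo-inverse.) -/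
open Matrix

local notation "⟪" x ", " y "⟫_ℂ" => @inner ℂ _ _ x y

private lemma esum_apply {n m : ℕ} (s : Finset (Fin n))
    (f : Fin n → EuclideanSpace ℂ (Fin m)) (i : Fin m) :
    (∑ x ∈ s, f x) i = ∑ x ∈ s, f x i := by
  induction s using Finset.cons_induction with
  | empty => rfl
  | cons a s ha ih => rw [Finset.sum_cons, Finset.sum_cons, ← ih, PiLp.add_apply]

/-- zero-forcing projection identity. With `H` the matrix whose
`k`-th row is `h_k†`, `HH†` invertible, `c_k` the `k`-th column of `H†(HH†)⁻¹`
and `d_k = ((HH†)⁻¹)_{kk}`: `d_k` is a positive real, `d_k = ‖c_k‖²`, and the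
orthogonal projection of `h_k` onto the orthogonal complement of
`span{h_j : j ≠ k}` equals `d_k⁻¹ • c_k`. -/
theorem stmt18 (K S : ℕ) (h : Fin K → EuclideanSpace ℂ (Fin S))
    (H : Matrix (Fin K) (Fin S) ℂ) (hH : ∀ k i, H k i = star (h k i))
    (hinv : IsUnit (H * Hᴴ))
    (c : Fin K → EuclideanSpace ℂ (Fin S))
    (hc : ∀ k i, c k i = (Hᴴ * (H * Hᴴ)⁻¹) i k)
    (d : Fin K → ℂ) (hd : ∀ k, d k = (H * Hᴴ)⁻¹ k k) :
    ∀ k, (d k).im = 0 ∧ 0 < (d k).re ∧ d k = ((‖c k‖ ^ 2 : ℝ) : ℂ) ∧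
      ((Submodule.orthogonalProjection
          ((Submodule.span ℂ {x | ∃ j, j ≠ k ∧ x = h j})ᗮ) (h k) :
        EuclideanSpace ℂ (Fin S)) = (d k)⁻¹ • c k) := by
  intro k
  set G := H * Hᴴ with hG
  have hdet : IsUnit G.det := (isUnit_iff_isUnit_det G).mp hinv
  have hGinv : G * G⁻¹ = 1 := mul_nonsing_inv G hdet
  have hherm : Gᴴ = G := by rw [hG, conjTranspose_mul, conjTranspose_conjTranspose]
  have hinvherm : (G⁻¹)ᴴ = G⁻¹ := by rw [conjTranspose_nonsing_inv, hherm]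
  have hHM : H * (Hᴴ * G⁻¹) = 1 := by rw [← Matrix.mul_assoc, ← hG, hGinv]
  -- inner products with rows
  have hinner : ∀ j, ⟪h j, c k⟫_ℂ = if j = k then 1 else 0 := by
    intro j
    have h1 := congrFun (congrFun hHM j) k
    rw [Matrix.mul_apply, Matrix.one_apply] at h1
    calc ⟪h j, c k⟫_ℂ = ∑ i, star (h j i) * c k i := by
          simp [PiLp.inner_apply, RCLike.inner_apply, mul_comm]
      _ = ∑ i, H j i * (Hᴴ * G⁻¹) i k := by
          refine Finset.sum_congr rfl fun i _ => by rw [hH, hc]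
      _ = if j = k then 1 else 0 := h1
  -- d k = ‖c k‖²
  have hMM : (Hᴴ * G⁻¹)ᴴ * (Hᴴ * G⁻¹) = G⁻¹ := by
    rw [conjTranspose_mul, conjTranspose_conjTranspose, Matrix.mul_assoc, hHM,
      Matrix.mul_one, hinvherm]
  have hdnorm : d k = ((‖c k‖ ^ 2 : ℝ) : ℂ) := by
    have h2 : ⟪c k, c k⟫_ℂ = ((Hᴴ * G⁻¹)ᴴ * (Hᴴ * G⁻¹)) k k := by
      rw [Matrix.mul_apply]
      simp only [PiLp.inner_apply, RCLike.inner_apply, conjTranspose_apply]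
      refine Finset.sum_congr rfl fun i _ => by rw [hc, starRingEnd_apply, mul_comm]
    rw [hd, ← hMM, ← h2, inner_self_eq_norm_sq_to_K]
    norm_cast
  have hcne : c k ≠ 0 := by
    intro h0
    have := hinner k
    rw [h0, inner_zero_right, if_pos rfl] at this
    exact one_ne_zero this.symm
  have hnormpos : (0:ℝ) < ‖c k‖ ^ 2 := pow_pos (norm_pos_iff.mpr hcne) 2
  have him : (d k).im = 0 := by rw [hdnorm]; exact Complex.ofReal_im _
  have hre : 0 < (d k).re := by rw [hdnorm, Complex.ofReal_re]; exact hnormpos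
  have hdne : d k ≠ 0 := by
    rw [hdnorm]; exact_mod_cast ne_of_gt hnormpos
  refine ⟨him, hre, hdnorm, ?_⟩
  set U := Submodule.span ℂ {x | ∃ j, j ≠ k ∧ x = h j} with hU
  -- c k ∈ Uᗮ
  have hcmem : (d k)⁻¹ • c k ∈ Uᗮ := by
    refine Submodule.smul_mem _ _ ?_
    rw [Submodule.mem_orthogonal]
    intro u hu
    induction hu using Submodule.span_induction with
    | mem x hx =>
        obtain ⟨j, hj, rfl⟩ := hx
        rw [hinner j, if_neg hj]
    | zero => exact inner_zero_left _
    | add x y _ _ hx hy => rw [inner_add_left, hx, hy, add_zero]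
    | smul a x _ hx => rw [inner_smul_left, hx, mul_zero]
  -- h k - (d k)⁻¹ • c k ∈ U
  have hdiff : h k - (d k)⁻¹ • c k ∈ U := by
    have hrep : (h k : EuclideanSpace ℂ (Fin S)) - (d k)⁻¹ • c k
        = ∑ j ∈ Finset.univ.erase k, (-(d k)⁻¹ * G⁻¹ j k) • h j := by
      ext i
      have hck : c k i = ∑ j, G⁻¹ j k * h j i := by
        rw [hc, Matrix.mul_apply]
        refine Finset.sum_congr rfl fun j _ => by
          rw [conjTranspose_apply, hH]; simp [mul_comm]
      have hsplit : (∑ j, G⁻¹ j k * h j i)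
          = G⁻¹ k k * h k i + ∑ j ∈ Finset.univ.erase k, G⁻¹ j k * h j i :=
        (Finset.add_sum_erase _ _ (Finset.mem_univ k)).symm
      have hdk : (d k)⁻¹ * G⁻¹ k k = 1 := by
        rw [← hd]; exact inv_mul_cancel₀ hdne
      simp only [PiLp.sub_apply, PiLp.smul_apply, smul_eq_mul, esum_apply]
      rw [hck, hsplit, mul_add, ← mul_assoc, hdk, one_mul, Finset.mul_sum]
      rw [sub_add_eq_sub_sub, sub_self, zero_sub, ← Finset.sum_neg_distrib]
      exact Finset.sum_congr rfl fun j _ => by ring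
    rw [hrep]
    refine Submodule.sum_mem _ fun j hj => Submodule.smul_mem _ _ ?_
    exact Submodule.subset_span ⟨j, Finset.ne_of_mem_erase hj, rfl⟩
  exact Submodule.eq_starProjection_of_mem_orthogonal hcmem
    (Submodule.le_orthogonal_orthogonal U hdiff)
end
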